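/- arXiv:1612.02458 — 5 statements merged into one kernel-verified Lean document; each statement's English description precedes it below -/
import Mathlib

section
/- If g : ℝ → ℝ is twice differentiable with g' nonvanishing on an interval and satisfies g''/g' = 2c₁²·g·g'/(1 + c₁²g²) for a constant c₁ ≠ 0, then there exist constants c₂ ≠ 0 and c₃ with g(z) = (1/c₁)·tan(c₂ z + c₃). -/
/-- Constancy on a convex open set from zero derivative. -/
lemma const_of_hasDerivAt_zero {s : Set ℝ} (hs : Convex ℝ s) (ho : IsOpen s)
    (f : ℝ → ℝ) (hf : ∀ x ∈ s, HasDerivAt f 0 x) :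
    ∀ x ∈ s, ∀ y ∈ s, f x = f y := by
  intro x hx y hy
  refine hs.is_const_of_fderivWithin_eq_zero
    (fun z hz => ((hf z hz).differentiableAt).differentiableWithinAt) (fun z hz => ?_) hx hy
  rw [fderivWithin_eq_fderiv (ho.uniqueDiffOn z hz) (hf z hz).differentiableAt,
    (hf z hz).hasFDerivAt.fderiv]
  ext
  simp

/-- If `g` is twice differentiable with nonvanishing derivative on an open interval and
satisfies `g''/g' = 2 c₁² g g' / (1 + c₁² g²)` with `c₁ ≠ 0`, then
`g z = (1/c₁) * tan (c₂ z + c₃)` for some `c₂ ≠ 0`, `c₃`. -/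
theorem stmt_1 (a b : ℝ) (hab : a < b) (c₁ : ℝ) (hc₁ : c₁ ≠ 0) (g : ℝ → ℝ)
    (hg : ∀ z ∈ Set.Ioo a b, DifferentiableAt ℝ g z)
    (hg' : ∀ z ∈ Set.Ioo a b, DifferentiableAt ℝ (deriv g) z)
    (hg'ne : ∀ z ∈ Set.Ioo a b, deriv g z ≠ 0)
    (hode : ∀ z ∈ Set.Ioo a b,
      deriv (deriv g) z / deriv g z
        = 2 * c₁ ^ 2 * g z * deriv g z / (1 + c₁ ^ 2 * (g z) ^ 2)) :
    ∃ c₂ : ℝ, c₂ ≠ 0 ∧ ∃ c₃ : ℝ, ∀ z ∈ Set.Ioo a b,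
      g z = (1 / c₁) * Real.tan (c₂ * z + c₃) := by
  set s := Set.Ioo a b with hsdef
  have hso : IsOpen s := isOpen_Ioo
  have hsc : Convex ℝ s := convex_Ioo a b
  -- positive denominator
  have hdpos : ∀ z, (0:ℝ) < 1 + c₁ ^ 2 * (g z) ^ 2 := fun z => by positivity
  have hdne : ∀ z, (1 + c₁ ^ 2 * (g z) ^ 2) ≠ 0 := fun z => (hdpos z).ne'
  set k : ℝ → ℝ := fun z => c₁ * deriv g z / (1 + c₁ ^ 2 * (g z) ^ 2) with hk
  -- the second derivative from the ODE
  have hg'' : ∀ z ∈ s, deriv (deriv g) z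
      = 2 * c₁ ^ 2 * g z * (deriv g z) ^ 2 / (1 + c₁ ^ 2 * (g z) ^ 2) := by
    intro z hz
    have h1 := hode z hz
    have h2 : deriv (deriv g) z = deriv g z * (deriv (deriv g) z / deriv g z) := by
      rw [mul_comm]
      exact (div_mul_cancel₀ _ (hg'ne z hz)).symm
    rw [h2, h1]
    ring
  -- k has zero derivative on s
  have hk0 : ∀ z ∈ s, HasDerivAt k 0 z := by
    intro z hz
    have hd : HasDerivAt (fun z => 1 + c₁ ^ 2 * (g z) ^ 2)
        (c₁ ^ 2 * (2 * g z * deriv g z)) z := by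
      have := (((hg z hz).hasDerivAt.pow 2).const_mul (c₁ ^ 2)).const_add 1
      simpa [mul_comm, mul_assoc, pow_one] using this
    have hn : HasDerivAt (fun z => c₁ * deriv g z) (c₁ * deriv (deriv g) z) z :=
      (hg' z hz).hasDerivAt.const_mul c₁
    have h := hn.div hd (hdne z)
    have hval : (c₁ * deriv (deriv g) z * (1 + c₁ ^ 2 * g z ^ 2) -
        c₁ * deriv g z * (c₁ ^ 2 * (2 * g z * deriv g z))) / (1 + c₁ ^ 2 * g z ^ 2) ^ 2
        = 0 := by
      rw [div_eq_zero_iff]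
      left
      rw [hg'' z hz]
      field_simp
      ring
    rw [hval] at h
    exact h
  -- k is a nonzero constant c₂ on s
  obtain ⟨z₀, hz₀⟩ : ∃ z₀, z₀ ∈ s := ⟨(a+b)/2, Set.mem_Ioo.2 ⟨by linarith, by linarith⟩⟩
  set c₂ := k z₀ with hc₂def
  have hkconst : ∀ z ∈ s, k z = c₂ := fun z hz =>
    const_of_hasDerivAt_zero hsc hso k hk0 z hz z₀ hz₀
  have hc₂ : c₂ ≠ 0 := by
    simp only [hc₂def, hk]
    exact div_ne_zero (mul_ne_zero hc₁ (hg'ne z₀ hz₀)) (hdne z₀)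
  -- F z = arctan (c₁ g z) - c₂ z has zero derivative
  set F : ℝ → ℝ := fun z => Real.arctan (c₁ * g z) - c₂ * z with hF
  have hF0 : ∀ z ∈ s, HasDerivAt F 0 z := by
    intro z hz
    have hu : HasDerivAt (fun z => c₁ * g z) (c₁ * deriv g z) z :=
      (hg z hz).hasDerivAt.const_mul c₁
    have harc : HasDerivAt (fun z => Real.arctan (c₁ * g z))
        (1 / (1 + (c₁ * g z) ^ 2) * (c₁ * deriv g z)) z :=
      hu.arctan
    have h := harc.sub ((hasDerivAt_id z).const_mul c₂)
    have hval : 1 / (1 + (c₁ * g z) ^ 2) * (c₁ * deriv g z) - c₂ * 1 = 0 := by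
      have hthis : c₁ * deriv g z / (1 + c₁ ^ 2 * g z ^ 2) = c₂ := hkconst z hz
      rw [← hthis]
      ring
    rw [hval] at h
    exact h
  set c₃ := F z₀ with hc₃def
  refine ⟨c₂, hc₂, c₃, fun z hz => ?_⟩
  have hFz : F z = c₃ := const_of_hasDerivAt_zero hsc hso F hF0 z hz z₀ hz₀
  have harcz : Real.arctan (c₁ * g z) = c₂ * z + c₃ := by
    simp only [hF] at hFz; linarith
  have := congrArg Real.tan harcz
  rw [Real.tan_arctan] at this
  field_simp
  linarith [this]
end

section
/- Suppose f, g are twice differentiable real functions on intervals with f, f', g, g', f'', g'' all nonvanishing, satisfying f(y)·g(z)·f''(y)·g''(z) = (f'(y))²(g'(z))² for all (y,z). Then there exists a constant c₁ ≠ 0 such that f f'' = c₁ (f')² and g g'' = (1/c₁)(g')² hold identically. -/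
/-- If `f, g` are twice differentiable with `f, f', f'', g, g', g''` all nonvanishing and
`f g f'' g'' = (f')² (g')²` holds for all `(y, z)`, then there is a constant
`c₁ ≠ 0` with `f f'' = c₁ (f')²` and `g g'' = (1/c₁) (g')²` identically. -/
theorem stmt_4 (a b c d : ℝ) (hab : a < b) (hcd : c < d) (f g : ℝ → ℝ)
    (hf : ∀ y ∈ Set.Ioo a b, DifferentiableAt ℝ f y)
    (hf' : ∀ y ∈ Set.Ioo a b, DifferentiableAt ℝ (deriv f) y)
    (hg : ∀ z ∈ Set.Ioo c d, DifferentiableAt ℝ g z)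
    (hg' : ∀ z ∈ Set.Ioo c d, DifferentiableAt ℝ (deriv g) z)
    (hfne : ∀ y ∈ Set.Ioo a b, f y ≠ 0)
    (hf'ne : ∀ y ∈ Set.Ioo a b, deriv f y ≠ 0)
    (hf''ne : ∀ y ∈ Set.Ioo a b, deriv (deriv f) y ≠ 0)
    (hgne : ∀ z ∈ Set.Ioo c d, g z ≠ 0)
    (hg'ne : ∀ z ∈ Set.Ioo c d, deriv g z ≠ 0)
    (hg''ne : ∀ z ∈ Set.Ioo c d, deriv (deriv g) z ≠ 0)
    (heq : ∀ y ∈ Set.Ioo a b, ∀ z ∈ Set.Ioo c d,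
      f y * g z * deriv (deriv f) y * deriv (deriv g) z
        = (deriv f y) ^ 2 * (deriv g z) ^ 2) :
    ∃ c₁ : ℝ, c₁ ≠ 0 ∧
      (∀ y ∈ Set.Ioo a b, f y * deriv (deriv f) y = c₁ * (deriv f y) ^ 2) ∧
      (∀ z ∈ Set.Ioo c d, g z * deriv (deriv g) z = (1 / c₁) * (deriv g z) ^ 2) := by
  have hy₀ : (a + b) / 2 ∈ Set.Ioo a b := ⟨by linarith, by linarith⟩
  have hz₀ : (c + d) / 2 ∈ Set.Ioo c d := ⟨by linarith, by linarith⟩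
  set y₀ := (a + b) / 2 with hy₀def
  set z₀ := (c + d) / 2 with hz₀def
  clear_value y₀ z₀
  clear hy₀def hz₀def
  refine ⟨f y₀ * deriv (deriv f) y₀ / (deriv f y₀) ^ 2, ?_, ?_, ?_⟩
  · exact div_ne_zero (mul_ne_zero (hfne _ hy₀) (hf''ne _ hy₀))
      (pow_ne_zero _ (hf'ne _ hy₀))
  · intro y hy
    have h1 := heq y hy z₀ hz₀
    have h2 := heq y₀ hy₀ z₀ hz₀
    have hg0 := hgne _ hz₀
    have hg'0 := hg'ne _ hz₀
    have hg''0 := hg''ne _ hz₀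
    have hf'0 := hf'ne _ hy₀
    have key : (f y * deriv (deriv f) y * (deriv f y₀) ^ 2 -
        (deriv f y) ^ 2 * (f y₀ * deriv (deriv f) y₀)) * (g z₀ * deriv (deriv g) z₀) = 0 := by
      ring_nf
      nlinarith [h1, h2]
    have h3 := (mul_eq_zero.mp key).resolve_right (mul_ne_zero hg0 hg''0)
    field_simp
    linarith [h3]
  · intro z hz
    have h1 := heq y₀ hy₀ z hz
    have hf0 := hfne _ hy₀
    have hf'0 := hf'ne _ hy₀
    have hf''0 := hf''ne _ hy₀
    field_simp
    nlinarith [h1]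
end

section
/- Let K₀ ≠ 0 and c₁ ≠ 0 be real constants. If f is differentiable, nonvanishing, and satisfies K₀ c₁² = −(f'/f²)² on an interval, then K₀ < 0 and there exists a constant c₃ with f(y) = 1/(± c₁ √(−K₀) y + c₃). -/
/-- If `K₀ ≠ 0`, `c₁ ≠ 0`, `f` is differentiable and nonvanishing with
`K₀ c₁² = -(f'/f²)²` on an interval, then `K₀ < 0` and
`f y = 1 / (± c₁ √(-K₀) y + c₃)` for some constant `c₃`. -/
theorem stmt_7 (K₀ c₁ : ℝ) (hK₀ : K₀ ≠ 0) (hc₁ : c₁ ≠ 0) (a b : ℝ) (hab : a < b)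
    (f : ℝ → ℝ)
    (hf : ∀ y ∈ Set.Ioo a b, DifferentiableAt ℝ f y)
    (hfne : ∀ y ∈ Set.Ioo a b, f y ≠ 0)
    (heq : ∀ y ∈ Set.Ioo a b, K₀ * c₁ ^ 2 = -(deriv f y / (f y) ^ 2) ^ 2) :
    K₀ < 0 ∧ ∃ ε : ℝ, (ε = 1 ∨ ε = -1) ∧ ∃ c₃ : ℝ, ∀ y ∈ Set.Ioo a b,
      f y = 1 / (ε * c₁ * Real.sqrt (-K₀) * y + c₃) := by
  set s := Set.Ioo a b with hs
  set y₀ : ℝ := (a + b) / 2 with hy₀def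
  have hy₀ : y₀ ∈ s := ⟨by simp only [hy₀def]; linarith, by simp only [hy₀def]; linarith⟩
  set g' : ℝ → ℝ := fun y => -(deriv f y) / (f y) ^ 2 with hg'
  have hd : ∀ y ∈ s, HasDerivAt (fun t => (f t)⁻¹) (g' y) y := by
    intro y hy
    simpa [hg'] using ((hf y hy).hasDerivAt).fun_inv (hfne y hy)
  have hsq : ∀ y ∈ s, (g' y) ^ 2 = -(K₀ * c₁ ^ 2) := by
    intro y hy
    have := heq y hy
    simp only [hg', neg_div, neg_sq]
    linarith
  have hne : ∀ y ∈ s, g' y ≠ 0 := by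
    intro y hy h0
    have h := hsq y hy
    rw [h0] at h
    have : K₀ * c₁ ^ 2 = 0 := by nlinarith
    exact mul_ne_zero hK₀ (pow_ne_zero 2 hc₁) this
  have hg'pos : 0 < (g' y₀) ^ 2 :=
    lt_of_le_of_ne (sq_nonneg _) (Ne.symm (pow_ne_zero 2 (hne y₀ hy₀)))
  have hc₁sq : 0 < c₁ ^ 2 := by positivity
  have hKneg : K₀ < 0 := by nlinarith [hsq y₀ hy₀]
  -- Darboux: derivative has constant sign, hence is constant
  have hsign := hasDerivWithinAt_forall_lt_or_forall_gt_of_forall_ne (convex_Ioo a b)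
    (fun y hy => (hd y hy).hasDerivWithinAt) (m := 0) hne
  have hconst : ∀ y ∈ s, g' y = g' y₀ := by
    intro y hy
    have h1 := hsq y hy
    have h2 := hsq y₀ hy₀
    rcases hsign with h | h
    · nlinarith [h y hy, h y₀ hy₀]
    · nlinarith [h y hy, h y₀ hy₀]
  -- MVT: (f ·)⁻¹ is affine with slope g' y₀
  have key : ∀ u ∈ s, ∀ v ∈ s, u < v → (f v)⁻¹ - (f u)⁻¹ = g' y₀ * (v - u) := by
    intro u hu v hv huv
    have hsub : Set.Icc u v ⊆ s := fun t ht => ⟨lt_of_lt_of_le hu.1 ht.1, lt_of_le_of_lt ht.2 hv.2⟩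
    obtain ⟨c, hc, hceq⟩ := exists_hasDerivAt_eq_slope (fun t => (f t)⁻¹) g' huv
      (fun t ht => ((hf t (hsub ht)).continuousAt.continuousWithinAt).inv₀ (hfne t (hsub ht)))
      (fun x hx => hd x (hsub (Set.mem_Icc_of_Ioo hx)))
    have hcs : c ∈ s := hsub (Set.mem_Icc_of_Ioo hc)
    rw [hconst c hcs, eq_div_iff (sub_ne_zero.mpr huv.ne')] at hceq
    linarith [hceq]
  have haffine : ∀ y ∈ s, (f y)⁻¹ = g' y₀ * y + ((f y₀)⁻¹ - g' y₀ * y₀) := by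
    intro y hy
    rcases lt_trichotomy y y₀ with h | h | h
    · have := key y hy y₀ hy₀ h; linarith
    · rw [h]; ring
    · have := key y₀ hy₀ y hy h; linarith
  -- construct ε and c₃
  have hKpos : 0 < -K₀ := by linarith
  have hsqrt : Real.sqrt (-K₀) ^ 2 = -K₀ := Real.sq_sqrt hKpos.le
  have hsqrtpos : 0 < Real.sqrt (-K₀) := Real.sqrt_pos.mpr hKpos
  set ε : ℝ := g' y₀ / (c₁ * Real.sqrt (-K₀)) with hεdef
  have hden : c₁ * Real.sqrt (-K₀) ≠ 0 := mul_ne_zero hc₁ hsqrtpos.ne'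
  have hεmul : ε * c₁ * Real.sqrt (-K₀) = g' y₀ := by
    rw [hεdef, mul_assoc]
    exact div_mul_cancel₀ _ hden
  have hεsq : ε ^ 2 = 1 := by
    rw [hεdef, div_pow, hsq y₀ hy₀, mul_pow, hsqrt]
    rw [div_eq_one_iff_eq (by positivity)]
    ring
  refine ⟨hKneg, ε, ?_, (f y₀)⁻¹ - g' y₀ * y₀, ?_⟩
  · have h3 : (ε - 1) * (ε + 1) = 0 := by nlinarith
    rcases mul_eq_zero.mp h3 with h | h
    · left; linarith
    · right; linarith
  · intro y hy
    rw [hεmul, ← haffine y hy, one_div, inv_inv]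
end

section
/- The surface x = y·tan(cz) (i.e., f(y) = y, g(z) = tan(cz), c ≠ 0) satisfies the isotropic minimality equation ((f'g)² + 1)g'' + g(g')²(f f'' − 2(f')²) = 0 wherever tan(cz) is defined. -/
open Real

lemma aux_one_div_cos_sq {x : ℝ} (h : Real.cos x ≠ 0) :
    1 / Real.cos x ^ 2 = Real.tan x ^ 2 + 1 := by
  rw [Real.tan_eq_sin_div_cos]
  field_simp
  exact (sin_sq_add_cos_sq x).symm

lemma aux_hasDerivAt_tan (c : ℝ) {z : ℝ} (h : Real.cos (c * z) ≠ 0) :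
    HasDerivAt (fun s : ℝ => Real.tan (c * s)) (c * (Real.tan (c * z) ^ 2 + 1)) z := by
  have h1 : HasDerivAt (fun s : ℝ => c * s) c z := by
    simpa using (hasDerivAt_id z).const_mul c
  have h2 := (Real.hasDerivAt_tan h).comp z h1
  rw [aux_one_div_cos_sq h, mul_comm] at h2
  exact h2

lemma aux_deriv_tan_eventually (c : ℝ) {z : ℝ} (h : Real.cos (c * z) ≠ 0) :
    deriv (fun s : ℝ => Real.tan (c * s))
      =ᶠ[nhds z] fun s => c * (Real.tan (c * s) ^ 2 + 1) := by
  have hopen : IsOpen {s : ℝ | Real.cos (c * s) ≠ 0} :=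
    isOpen_compl_iff.mpr (isClosed_eq (Real.continuous_cos.comp (continuous_const.mul
      continuous_id)) continuous_const)
  filter_upwards [hopen.mem_nhds h] with s hs
  exact (aux_hasDerivAt_tan c hs).deriv

/-- The surface `x = y tan (c z)`, i.e. `f y = y`, `g z = tan (c z)` with `c ≠ 0`,
satisfies the isotropic minimality equation
`((f'g)² + 1) g'' + g (g')² (f f'' - 2 (f')²) = 0` wherever `cos (c z) ≠ 0`. -/
theorem stmt_16 (c : ℝ) (hc : c ≠ 0) :
    ∀ y z : ℝ, Real.cos (c * z) ≠ 0 →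
      ((deriv (fun t : ℝ => t) y * Real.tan (c * z)) ^ 2 + 1)
          * deriv (deriv (fun s : ℝ => Real.tan (c * s))) z
        + Real.tan (c * z) * (deriv (fun s : ℝ => Real.tan (c * s)) z) ^ 2
          * (y * deriv (deriv (fun t : ℝ => t)) y
            - 2 * (deriv (fun t : ℝ => t) y) ^ 2) = 0 := by
  intro y z hz
  have hid : deriv (fun t : ℝ => t) = fun _ => (1 : ℝ) := by
    funext t; simp
  have hid2 : deriv (deriv (fun t : ℝ => t)) y = 0 := by
    rw [hid]; simp
  have hd1 : deriv (fun s : ℝ => Real.tan (c * s)) z = c * (Real.tan (c * z) ^ 2 + 1) :=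
    (aux_hasDerivAt_tan c hz).deriv
  have hd2 : deriv (deriv (fun s : ℝ => Real.tan (c * s))) z
      = c * (2 * Real.tan (c * z) * (c * (Real.tan (c * z) ^ 2 + 1))) := by
    rw [(aux_deriv_tan_eventually c hz).deriv_eq]
    have h1 : HasDerivAt (fun s : ℝ => Real.tan (c * s)) (c * (Real.tan (c * z) ^ 2 + 1)) z :=
      aux_hasDerivAt_tan c hz
    have h2 : HasDerivAt (fun s : ℝ => c * (Real.tan (c * s) ^ 2 + 1))
        (c * (2 * Real.tan (c * z) * (c * (Real.tan (c * z) ^ 2 + 1)))) z := by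
      have := ((h1.pow 2).add_const 1).const_mul c
      refine this.congr_deriv ?_
      ring
    exact h2.deriv
  rw [hid2, hd1, hd2, hid]
  ring
end

section
/- Let c₁ ≠ 0 with f(y) = c₁y^{c₂} and g(z) = c₃z^{c₄} where c₂ + c₄ = 1 and c₂c₄ ≠ 0. Then f g f'' g'' − (f' g')² = 0 for all y, z > 0; i.e., the surface x = c·y^{c₂}z^{c₄} is isotropic flat. -/
private lemma deriv1 (c p : ℝ) {y : ℝ} (hy : 0 < y) :
    deriv (fun t : ℝ => c * t ^ p) y = c * p * y ^ (p - 1) := by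
  rw [deriv_const_mul _ ((Real.hasDerivAt_rpow_const (Or.inl hy.ne')).differentiableAt)]
  rw [(Real.hasDerivAt_rpow_const (Or.inl hy.ne')).deriv]
  ring

private lemma deriv2 (c p : ℝ) {y : ℝ} (hy : 0 < y) :
    deriv (deriv (fun t : ℝ => c * t ^ p)) y = c * p * (p - 1) * y ^ (p - 2) := by
  have hev : deriv (fun t : ℝ => c * t ^ p) =ᶠ[nhds y]
      fun t : ℝ => (c * p) * t ^ (p - 1) := by
    filter_upwards [IsOpen.mem_nhds isOpen_Ioi hy] with t ht
    exact deriv1 c p ht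
  rw [hev.deriv_eq, deriv1 (c * p) (p - 1) hy]
  ring_nf

/-- With `f y = c₁ y^{c₂}` and `g z = c₃ z^{c₄}`, `c₁, c₃ ≠ 0`, `c₂ + c₄ = 1`,
`c₂ c₄ ≠ 0`, we have `f g f'' g'' - (f' g')² = 0` for all `y, z > 0`; i.e. the
surface `x = c y^{c₂} z^{c₄}` is isotropic flat. -/
theorem stmt_18 (c₁ c₂ c₃ c₄ : ℝ) (hc₁ : c₁ ≠ 0) (hc₃ : c₃ ≠ 0)
    (hsum : c₂ + c₄ = 1) (hprod : c₂ * c₄ ≠ 0) :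
    ∀ y : ℝ, 0 < y → ∀ z : ℝ, 0 < z →
      (c₁ * y ^ c₂) * (c₃ * z ^ c₄)
          * deriv (deriv (fun t : ℝ => c₁ * t ^ c₂)) y
          * deriv (deriv (fun s : ℝ => c₃ * s ^ c₄)) z
        - (deriv (fun t : ℝ => c₁ * t ^ c₂) y
            * deriv (fun s : ℝ => c₃ * s ^ c₄) z) ^ 2 = 0 := by
  intro y hy z hz
  rw [deriv1 c₁ c₂ hy, deriv1 c₃ c₄ hz, deriv2 c₁ c₂ hy, deriv2 c₃ c₄ hz]
  have hy2 : y ^ c₂ * y ^ (c₂ - 2) = (y ^ (c₂ - 1)) ^ 2 := by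
    rw [← Real.rpow_add hy, ← Real.rpow_natCast (y ^ (c₂ - 1)) 2,
      ← Real.rpow_mul hy.le]
    norm_num; ring_nf
  have hz2 : z ^ c₄ * z ^ (c₄ - 2) = (z ^ (c₄ - 1)) ^ 2 := by
    rw [← Real.rpow_add hz, ← Real.rpow_natCast (z ^ (c₄ - 1)) 2,
      ← Real.rpow_mul hz.le]
    norm_num; ring_nf
  have hcoef : c₂ * (c₂ - 1) * (c₄ * (c₄ - 1)) = (c₂ * c₄) ^ 2 := by
    have h1 : c₂ - 1 = -c₄ := by linarith
    have h2 : c₄ - 1 = -c₂ := by linarith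
    rw [h1, h2]; ring
  linear_combination
    (c₁ ^ 2 * c₃ ^ 2 * (c₂ * (c₂ - 1) * (c₄ * (c₄ - 1))) * (z ^ c₄ * z ^ (c₄ - 2))) * hy2
    + (c₁ ^ 2 * c₃ ^ 2 * (c₂ * (c₂ - 1) * (c₄ * (c₄ - 1))) * (y ^ (c₂ - 1)) ^ 2) * hz2
    + (c₁ ^ 2 * c₃ ^ 2 * (y ^ (c₂ - 1)) ^ 2 * (z ^ (c₄ - 1)) ^ 2) * hcoef
end
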